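/- Let p : (0,∞) → ℝ be twice continuously differentiable with p'(ρ) > 0 for all ρ > 0 and c(ρ) = √(p'(ρ)). Assume lim_{ρ→0⁺} c(ρ) = 0 and 2·p'(ρ) − ρ·p''(ρ) ≥ 0 for all ρ > 0. Then for every ρ_l > 0, liminf_{ρ→0⁺} ( ∫_ρ^{ρ_l} c(s)/s ds − c(ρ) − c(ρ_l) ) ≥ 0. -/

import Mathlib

open Filter Topology Set MeasureTheory intervalIntegral

/-- For `p ∈ C²((0,∞))` with `p' > 0`, `c = √p'`,
`lim_{ρ→0⁺} c(ρ) = 0` and `2p'(ρ) − ρp''(ρ) ≥ 0`, one has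
`liminf_{ρ→0⁺} ( ∫_ρ^{ρ_l} c(s)/s ds − c(ρ) − c(ρ_l) ) ≥ 0`
for every `ρ_l > 0`. -/
theorem stmt14 (p p' p'' : ℝ → ℝ)
    (hp' : ∀ ρ > (0 : ℝ), HasDerivAt p (p' ρ) ρ)
    (hp'' : ∀ ρ > (0 : ℝ), HasDerivAt p' (p'' ρ) ρ)
    (hp''cont : ContinuousOn p'' (Set.Ioi 0))
    (hppos : ∀ ρ > (0 : ℝ), 0 < p' ρ)
    (hlim : Tendsto (fun ρ => Real.sqrt (p' ρ)) (𝓝[>] (0 : ℝ)) (𝓝 0))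
    (hineq : ∀ ρ > (0 : ℝ), 0 ≤ 2 * p' ρ - ρ * p'' ρ) :
    ∀ ρl > (0 : ℝ),
      0 ≤ Filter.liminf
        (fun ρ => (∫ s in ρ..ρl, Real.sqrt (p' s) / s) -
          Real.sqrt (p' ρ) - Real.sqrt (p' ρl)) (𝓝[>] (0 : ℝ)) := by
  intro ρl hρl
  have hp'cont : ContinuousOn p' (Ioi 0) := fun x hx =>
    (hp'' x hx).continuousAt.continuousWithinAt
  have hc : ∀ x > (0:ℝ), HasDerivAt (fun y => Real.sqrt (p' y))
      (p'' x / (2 * Real.sqrt (p' x))) x := by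
    intro x hx
    have h1 := (Real.hasDerivAt_sqrt (ne_of_gt (hppos x hx))).comp x (hp'' x hx)
    rw [show p'' x / (2 * Real.sqrt (p' x)) = 1 / (2 * Real.sqrt (p' x)) * p'' x by ring]
    exact h1
  have key : ∀ ρ ∈ Ioo (0:ℝ) ρl,
      Real.sqrt (p' ρl) - Real.sqrt (p' ρ) ≤ ∫ s in ρ..ρl, Real.sqrt (p' s) / s := by
    intro ρ hρ
    have hρ0 := hρ.1
    have hle : ρ ≤ ρl := hρ.2.le
    have hsub : Icc ρ ρl ⊆ Ioi 0 := fun x hx => lt_of_lt_of_le hρ0 hx.1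
    have hcontd : ContinuousOn (fun x => p'' x / (2 * Real.sqrt (p' x))) (Ioi 0) := by
      apply hp''cont.div (continuousOn_const.mul hp'cont.sqrt)
      intro x hx
      have := Real.sqrt_pos.mpr (hppos x hx)
      exact mul_ne_zero two_ne_zero this.ne'
    have hcontg : ContinuousOn (fun x => Real.sqrt (p' x) / x) (Ioi 0) := by
      apply hp'cont.sqrt.div continuousOn_id
      intro x hx; exact ne_of_gt hx
    have hintd : IntervalIntegrable (fun x => p'' x / (2 * Real.sqrt (p' x))) volume ρ ρl :=
      (hcontd.mono hsub).intervalIntegrable_of_Icc hle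
    have hintg : IntervalIntegrable (fun x => Real.sqrt (p' x) / x) volume ρ ρl :=
      (hcontg.mono hsub).intervalIntegrable_of_Icc hle
    have hftc : (∫ s in ρ..ρl, p'' s / (2 * Real.sqrt (p' s)))
        = Real.sqrt (p' ρl) - Real.sqrt (p' ρ) := by
      apply intervalIntegral.integral_eq_sub_of_hasDerivAt
      · intro x hx
        rw [uIcc_of_le hle] at hx
        exact hc x (hsub hx)
      · exact hintd
    rw [← hftc]
    apply intervalIntegral.integral_mono_on hle hintd hintg
    intro x hx
    have hx0 : 0 < x := hsub hx
    have hs : 0 < Real.sqrt (p' x) := Real.sqrt_pos.mpr (hppos x hx0)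
    rw [div_le_div_iff₀ (by positivity) hx0]
    nlinarith [Real.mul_self_sqrt (hppos x hx0).le, hineq x hx0]
  have hev : ∀ᶠ ρ in 𝓝[>] (0:ℝ),
      (-2) * Real.sqrt (p' ρ) ≤
        (∫ s in ρ..ρl, Real.sqrt (p' s) / s) - Real.sqrt (p' ρ) - Real.sqrt (p' ρl) := by
    filter_upwards [Ioo_mem_nhdsGT_of_mem (left_mem_Ico.mpr hρl)] with ρ hρ
    linarith [key ρ hρ]
  have hg : Tendsto (fun ρ => (-2:ℝ) * Real.sqrt (p' ρ)) (𝓝[>] (0:ℝ)) (𝓝 0) := by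
    have := hlim.const_mul (-2:ℝ)
    simpa using this
  rw [Filter.liminf_eq]
  set S := {a : ℝ | ∀ᶠ ρ in 𝓝[>] (0:ℝ), a ≤
      (∫ s in ρ..ρl, Real.sqrt (p' s) / s) - Real.sqrt (p' ρ) - Real.sqrt (p' ρl)} with hS
  by_cases hbdd : BddAbove S
  · apply le_of_forall_lt
    intro y hy
    have hyS : y / 2 ∈ S := by
      have h2 : ∀ᶠ ρ in 𝓝[>] (0:ℝ), y / 2 < (-2:ℝ) * Real.sqrt (p' ρ) :=
        hg.eventually (eventually_gt_nhds (by linarith))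
      filter_upwards [hev, h2] with ρ h1 h2
      linarith
    calc y < y / 2 := by linarith
      _ ≤ sSup S := le_csSup hbdd hyS
  · rw [Real.sSup_of_not_bddAbove hbdd]
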